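/- Let G be a connected simple graph. Then G is {P_4, paw, K_4}-free if and only if G is an induced subgraph of a complete tripartite graph. -/

import Mathlib

/-- The paw graph: a triangle on vertices 1,2,3 with a pendant vertex 0 adjacent to 1. -/
def pawGraph : SimpleGraph (Fin 4) :=
  SimpleGraph.fromRel (fun i j =>
    (i = 0 ∧ j = 1) ∨ (i = 1 ∧ j = 2) ∨ (i = 2 ∧ j = 3) ∨ (i = 1 ∧ j = 3))

section Aux

variable {V : Type*} (G : SimpleGraph V)

lemma path4_embed {a b c d : V}
    (h1 : G.Adj a b) (h2 : G.Adj b c) (h3 : G.Adj c d)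
    (n1 : ¬ G.Adj a c) (n2 : ¬ G.Adj a d) (n3 : ¬ G.Adj b d) :
    Nonempty (SimpleGraph.pathGraph 4 ↪g G) := by
  have hab : a ≠ b := G.ne_of_adj h1
  have hbc : b ≠ c := G.ne_of_adj h2
  have hcd : c ≠ d := G.ne_of_adj h3
  have hac : a ≠ c := by rintro rfl; exact n2 h3
  have had : a ≠ d := by rintro rfl; exact n1 h3.symm
  have hbd : b ≠ d := by rintro rfl; exact n2 h1
  refine ⟨⟨⟨![a, b, c, d], ?_⟩, ?_⟩⟩
  · intro i j hij
    fin_cases i <;> fin_cases j <;> simp_all <;> first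
      | rfl | (exfalso; simp_all [eq_comm])
  · intro i j
    have n1' := fun (h : G.Adj c a) => n1 h.symm
    have n2' := fun (h : G.Adj d a) => n2 h.symm
    have n3' := fun (h : G.Adj d b) => n3 h.symm
    fin_cases i <;> fin_cases j <;>
      simp [SimpleGraph.pathGraph_adj, h1, h2, h3, h1.symm, h2.symm, h3.symm,
        n1, n2, n3, n1', n2', n3', G.loopless] <;>
      first | decide | assumption | (norm_num; tauto)

lemma paw_embed {p t1 t2 t3 : V}
    (h1 : G.Adj p t1) (h2 : G.Adj t1 t2) (h3 : G.Adj t1 t3) (h4 : G.Adj t2 t3)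
    (n1 : ¬ G.Adj p t2) (n2 : ¬ G.Adj p t3) :
    Nonempty (pawGraph ↪g G) := by
  have e1 : p ≠ t1 := G.ne_of_adj h1
  have e2 : t1 ≠ t2 := G.ne_of_adj h2
  have e3 : t1 ≠ t3 := G.ne_of_adj h3
  have e4 : t2 ≠ t3 := G.ne_of_adj h4
  have e5 : p ≠ t2 := by rintro rfl; exact n2 h4
  have e6 : p ≠ t3 := by rintro rfl; exact n1 h4.symm
  refine ⟨⟨⟨![p, t1, t2, t3], ?_⟩, ?_⟩⟩
  · intro i j hij
    fin_cases i <;> fin_cases j <;> simp_all <;> first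
      | rfl | (exfalso; simp_all [eq_comm])
  · intro i j
    have n1' := fun (h : G.Adj t2 p) => n1 h.symm
    have n2' := fun (h : G.Adj t3 p) => n2 h.symm
    fin_cases i <;> fin_cases j <;>
      simp [pawGraph, SimpleGraph.fromRel_adj, h1, h2, h3, h4,
        h1.symm, h2.symm, h3.symm, h4.symm, n1, n2, n1', n2', G.loopless,
        e1, e2, e3, e4, e5, e6, e1.symm, e2.symm, e3.symm, e4.symm, e5.symm, e6.symm,
        Fin.ext_iff, -Fin.val_eq_zero_iff] <;>
      first | decide | assumption | (norm_num; tauto) | tauto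

/-- Core lemma: if `G` has no induced `P₄` or paw, `x b` is an edge, and `c` has a
walk to `x` while being nonadjacent to both `x` and `b`, we get a contradiction. -/
lemma no_bad_triple
    (noP4 : ¬ Nonempty (SimpleGraph.pathGraph 4 ↪g G))
    (nopaw : ¬ Nonempty (pawGraph ↪g G)) :
    ∀ {c x : V}, G.Walk c x → ∀ {b : V}, G.Adj x b → ¬ G.Adj c x → ¬ G.Adj c b → False := by
  intro c x w
  induction w with
  | nil => exact fun hb _ hcb => hcb hb
  | @cons c d x h p ih =>
    intro b hxb hcx hcb
    by_cases hdx : G.Adj d x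
    · by_cases hdb : G.Adj d b
      · exact nopaw (paw_embed G h hdx hdb hxb hcx hcb)
      · exact noP4 (path4_embed G h hdx hxb hcx hcb hdb)
    · by_cases hdb : G.Adj d b
      · exact noP4 (path4_embed G h hdb hxb.symm hcb hcx hdx)
      · exact ih hxb hdx hdb

end Aux

theorem P4_paw_K4_free_iff_induced_complete_tripartite {V : Type*} [Fintype V]
    (G : SimpleGraph V) (hconn : G.Connected) :
    (¬ Nonempty (SimpleGraph.pathGraph 4 ↪g G) ∧
     ¬ Nonempty (pawGraph ↪g G) ∧
     ¬ Nonempty ((⊤ : SimpleGraph (Fin 4)) ↪g G)) ↔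
    ∃ m : Fin 3 → ℕ, (∀ i, 0 < m i) ∧
      Nonempty (G ↪g SimpleGraph.completeMultipartiteGraph (fun i : Fin 3 => Fin (m i))) := by
  classical
  constructor
  · rintro ⟨noP4, nopaw, noK4⟩
    -- non-adjacency is an equivalence relation
    have trans : ∀ {x y z : V}, ¬ G.Adj x y → ¬ G.Adj y z → ¬ G.Adj x z := by
      intro x y z hxy hyz hxz
      have hw : G.Walk y x := (hconn.preconnected y x).some
      exact no_bad_triple G noP4 nopaw hw hxz (fun h => hxy h.symm) hyz
    let s : Setoid V := ⟨fun x y => ¬ G.Adj x y,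
      ⟨fun x => G.irrefl, fun h hh => h hh.symm, trans⟩⟩
    let Q := Quotient s
    have hQadj : ∀ x y : V, (⟦x⟧ : Q) ≠ ⟦y⟧ ↔ G.Adj x y := fun x y =>
      ⟨fun hne => by_contra fun hn => hne (Quotient.sound hn),
       fun hadj heq => Quotient.exact heq hadj⟩
    -- at most 3 classes
    have hcard : Fintype.card Q ≤ 3 := by
      by_contra h
      push_neg at h
      have h4 : Fintype.card (Fin 4) ≤ Fintype.card Q := by rw [Fintype.card_fin]; exact h
      obtain ⟨f⟩ := Function.Embedding.nonempty_of_card_le h4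
      refine noK4 ⟨⟨⟨fun i => (f i).out, ?_⟩, ?_⟩⟩
      · intro i j hij
        apply f.injective
        have hij' : (f i).out = (f j).out := hij
        rw [← Quotient.out_eq (f i), ← Quotient.out_eq (f j), hij']
      · intro i j
        simp only [SimpleGraph.top_adj]
        constructor
        · exact fun h => fun hij => G.irrefl (hij ▸ h)
        · intro hij
          have hne : (⟦(f i).out⟧ : Q) ≠ ⟦(f j).out⟧ := by
            simp only [Quotient.out_eq]
            exact fun hh => hij (f.injective hh)
          exact (hQadj _ _).mp hne
    let e : Q ≃ Fin (Fintype.card Q) := Fintype.equivFin Q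
    let part : V → Fin 3 := fun v => Fin.castLE hcard (e ⟦v⟧)
    have hpart : ∀ x y : V, part x ≠ part y ↔ G.Adj x y := by
      intro x y
      rw [← hQadj]
      constructor
      · intro h hh; exact h (by simp [part, hh])
      · intro h hh
        exact h (e.injective (Fin.castLE_injective hcard hh))
    let m : Fin 3 → ℕ := fun i => max (Fintype.card {v : V // part v = i}) 1
    refine ⟨m, fun i => lt_max_of_lt_right one_pos, ?_⟩
    have fibEmb : ∀ i : Fin 3, {v : V // part v = i} ↪ Fin (m i) := fun i =>
      ((Fintype.equivFin {v : V // part v = i}).toEmbedding).trans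
        (Fin.castLEEmb (le_max_left _ _))
    let F : V ↪ Σ i : Fin 3, Fin (m i) :=
      ((Equiv.sigmaFiberEquiv part).symm.toEmbedding).trans
        (Function.Embedding.sigmaMap (Function.Embedding.refl _) fibEmb)
    have hF1 : ∀ v : V, (F v).1 = part v := fun v => rfl
    refine ⟨⟨F, ?_⟩⟩
    intro x y
    simp only [SimpleGraph.comap_adj, SimpleGraph.top_adj]
    rw [hF1, hF1]
    exact hpart x y
  · rintro ⟨m, _, ⟨emb⟩⟩
    have key : ∀ (H : SimpleGraph (Fin 4)), (H ↪g G) →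
        ∃ p : Fin 4 → Fin 3,
          (∀ i j, H.Adj i j → p i ≠ p j) ∧
          (∀ i j, i ≠ j → ¬ H.Adj i j → p i = p j) := by
      intro H f
      let g := emb.comp f
      refine ⟨fun i => (g i).1, ?_, ?_⟩
      · intro i j hij
        have := g.map_rel_iff.mpr hij
        simpa using this
      · intro i j hij hnadj
        by_contra hne
        exact hnadj (g.map_rel_iff.mp (by simpa using hne))
    refine ⟨?_, ?_, ?_⟩
    · rintro ⟨f⟩
      obtain ⟨p, h1, h2⟩ := key _ f
      have a02 : p 0 = p 2 := h2 0 2 (by decide)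
        (by rw [SimpleGraph.pathGraph_adj]; decide)
      have a03 : p 0 = p 3 := h2 0 3 (by decide)
        (by rw [SimpleGraph.pathGraph_adj]; decide)
      have a23 : p 2 ≠ p 3 := h1 2 3 (by rw [SimpleGraph.pathGraph_adj]; decide)
      exact a23 (a02 ▸ a03 ▸ rfl)
    · rintro ⟨f⟩
      obtain ⟨p, h1, h2⟩ := key _ f
      have a02 : p 0 = p 2 := h2 0 2 (by decide)
        (by rw [pawGraph, SimpleGraph.fromRel_adj]; decide)
      have a03 : p 0 = p 3 := h2 0 3 (by decide)
        (by rw [pawGraph, SimpleGraph.fromRel_adj]; decide)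
      have a23 : p 2 ≠ p 3 := h1 2 3
        (by rw [pawGraph, SimpleGraph.fromRel_adj]; decide)
      exact a23 (a02 ▸ a03 ▸ rfl)
    · rintro ⟨f⟩
      obtain ⟨p, h1, _⟩ := key _ f
      have : Function.Injective p := by
        intro i j hij
        by_contra hne
        exact h1 i j (by simpa using hne) hij
      have := Fintype.card_le_of_injective p this
      simp at this
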